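/- In the weighted unit-size setting, the dual variables α_i (defined from the weights of higher-weight jobs present at release and lower-weight jobs pushed back) and β_{u,t} = ω_u(t)/(2s) form a feasible dual solution: for every job i and time t ≥ r_i, α_i − β_{u_i,t}/d_{u_i} − β_{v_i,t}/d_{v_i} ≤ w_i (t − r_i). -/

import Mathlib

open Finset

attribute [local instance] Classical.propDecidable

variable {V J : Type*}

/-- Job `j` is alive (released but uncompleted) at time `t`: `r j ≤ t < C j`. -/
def Alive (r C : J → ℕ) (j : J) (t : ℕ) : Prop := r j ≤ t ∧ t < C j

/-- `ω a t`: total weight of alive jobs incident to vertex `a` at time `t`. -/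
noncomputable def omega [Fintype J] [DecidableEq V] (u v : J → V) (wt : J → ℝ)
    (r C : J → ℕ) (a : V) (t : ℕ) : ℝ :=
  ∑ j ∈ univ.filter (fun j => (u j = a ∨ v j = a) ∧ Alive r C j t), wt j

/-- The alive jobs at time `t` sharing vertex `a`. -/
noncomputable def aliveAt [Fintype J] [DecidableEq V] (u v : J → V) (r C : J → ℕ)
    (a : V) (t : ℕ) : Finset J :=
  univ.filter (fun j => (u j = a ∨ v j = a) ∧ Alive r C j t)

/-- The dual variable `α_i` of the weighted dual-fitting analysis. -/
noncomputable def alphaDual [Fintype J] [DecidableEq V] (u v : J → V) (d : V → ℕ)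
    (wt : J → ℝ) (r C : J → ℕ) (s : ℝ) (i : J) : ℝ :=
  (1 / (2 * s)) *
    ((1 / (d (u i) : ℝ)) *
        (wt i * ((aliveAt u v r C (u i) (r i)).filter (fun j => wt i < wt j)).card
          + ∑ j ∈ (aliveAt u v r C (u i) (r i)).filter (fun j => wt j < wt i), wt j)
      + (1 / (d (v i) : ℝ)) *
        (wt i * ((aliveAt u v r C (v i) (r i)).filter (fun j => wt i < wt j)).card
          + ∑ j ∈ (aliveAt u v r C (v i) (r i)).filter (fun j => wt j < wt i), wt j))

/-- Per-vertex key bound: the α-numerator at vertex `a` is at most `ω_a(t)` plus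
`w_i · (s·d_a) · (t − r_i)`. -/
lemma key_bound [Fintype J] [DecidableEq V]
    (u v : J → V) (wt : J → ℝ) (r C : J → ℕ) (s da : ℝ)
    (hwt : ∀ j, 0 ≤ wt j) (a : V)
    (hcap : ∀ τ : ℕ,
      ((univ.filter (fun j => C j = τ ∧ (u j = a ∨ v j = a))).card : ℝ) ≤ s * da)
    (i : J) (t : ℕ) (ht : r i ≤ t) :
    wt i * (((aliveAt u v r C a (r i)).filter (fun j => wt i < wt j)).card : ℝ)
      + ∑ j ∈ (aliveAt u v r C a (r i)).filter (fun j => wt j < wt i), wt j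
    ≤ omega u v wt r C a t + wt i * (s * da) * ((t : ℝ) - (r i : ℝ)) := by
  classical
  set S := aliveAt u v r C a (r i) with hS
  set H := S.filter (fun j => wt i < wt j) with hH
  set L := S.filter (fun j => wt j < wt i) with hL
  have hdisj : Disjoint H L := by
    rw [Finset.disjoint_left]
    intro j hjH hjL
    have h1 := (Finset.mem_filter.mp hjH).2
    have h2 := (Finset.mem_filter.mp hjL).2
    linarith
  have h1 : wt i * (H.card : ℝ) + ∑ j ∈ L, wt j
      = ∑ j ∈ H ∪ L, min (wt i) (wt j) := by
    rw [Finset.sum_union hdisj]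
    congr 1
    · have h2 : ∑ j ∈ H, min (wt i) (wt j) = ∑ _j ∈ H, wt i :=
        Finset.sum_congr rfl (fun j hj =>
          min_eq_left (le_of_lt (Finset.mem_filter.mp hj).2))
      rw [h2, Finset.sum_const, nsmul_eq_mul, mul_comm]
    · exact (Finset.sum_congr rfl (fun j hj =>
        min_eq_right (le_of_lt (Finset.mem_filter.mp hj).2))).symm
  have hmem : ∀ j ∈ H ∪ L, (u j = a ∨ v j = a) ∧ Alive r C j (r i) := by
    intro j hj
    have hjS : j ∈ S := by
      rcases Finset.mem_union.mp hj with h | h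
      · exact (Finset.mem_filter.mp h).1
      · exact (Finset.mem_filter.mp h).1
    rw [hS] at hjS
    simpa [aliveAt, Finset.mem_filter] using hjS
  rw [h1, ← Finset.sum_filter_add_sum_filter_not (H ∪ L) (fun j => Alive r C j t)]
  have hA : ∑ j ∈ (H ∪ L).filter (fun j => Alive r C j t), min (wt i) (wt j)
      ≤ omega u v wt r C a t := by
    have hsub : (H ∪ L).filter (fun j => Alive r C j t) ⊆ aliveAt u v r C a t := by
      intro j hj
      obtain ⟨hjP, hjalive⟩ := Finset.mem_filter.mp hj
      exact Finset.mem_filter.mpr ⟨Finset.mem_univ j, (hmem j hjP).1, hjalive⟩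
    calc ∑ j ∈ (H ∪ L).filter (fun j => Alive r C j t), min (wt i) (wt j)
        ≤ ∑ j ∈ (H ∪ L).filter (fun j => Alive r C j t), wt j :=
          Finset.sum_le_sum (fun j _ => min_le_right _ _)
      _ ≤ ∑ j ∈ aliveAt u v r C a t, wt j :=
          Finset.sum_le_sum_of_subset_of_nonneg hsub (fun j _ _ => hwt j)
      _ = omega u v wt r C a t := rfl
  have hB : ∑ j ∈ (H ∪ L).filter (fun j => ¬ Alive r C j t), min (wt i) (wt j)
      ≤ wt i * (s * da) * ((t : ℝ) - (r i : ℝ)) := by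
    set D := (H ∪ L).filter (fun j => ¬ Alive r C j t) with hD
    have hDsub : D ⊆ (Finset.Ioc (r i) t).biUnion
        (fun τ => univ.filter (fun j => C j = τ ∧ (u j = a ∨ v j = a))) := by
      intro j hj
      obtain ⟨hjP, hjdead⟩ := Finset.mem_filter.mp hj
      obtain ⟨hinc, halive⟩ := hmem j hjP
      obtain ⟨hrle, hlt⟩ := halive
      have hCle : C j ≤ t := by
        by_contra hc
        exact hjdead ⟨le_trans hrle ht, lt_of_not_ge hc⟩
      exact Finset.mem_biUnion.mpr ⟨C j, Finset.mem_Ioc.mpr ⟨hlt, hCle⟩,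
        Finset.mem_filter.mpr ⟨Finset.mem_univ j, rfl, hinc⟩⟩
    have hcard : (D.card : ℝ) ≤ (s * da) * ((t : ℝ) - (r i : ℝ)) := by
      have h1 : D.card ≤ ∑ τ ∈ Finset.Ioc (r i) t,
          (univ.filter (fun j => C j = τ ∧ (u j = a ∨ v j = a))).card :=
        le_trans (Finset.card_le_card hDsub) Finset.card_biUnion_le
      have h2 : (D.card : ℝ) ≤ ∑ τ ∈ Finset.Ioc (r i) t,
          ((univ.filter (fun j => C j = τ ∧ (u j = a ∨ v j = a))).card : ℝ) := by
        exact_mod_cast h1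
      calc (D.card : ℝ) ≤ _ := h2
        _ ≤ ∑ _τ ∈ Finset.Ioc (r i) t, s * da := Finset.sum_le_sum (fun τ _ => hcap τ)
        _ = ((t - r i : ℕ) : ℝ) * (s * da) := by
            rw [Finset.sum_const, Nat.card_Ioc, nsmul_eq_mul]
        _ = (s * da) * ((t : ℝ) - (r i : ℝ)) := by rw [Nat.cast_sub ht]; ring
    calc ∑ j ∈ D, min (wt i) (wt j) ≤ ∑ _j ∈ D, wt i :=
          Finset.sum_le_sum (fun j _ => min_le_left _ _)
      _ = (D.card : ℝ) * wt i := by rw [Finset.sum_const, nsmul_eq_mul]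
      _ ≤ (s * da) * ((t : ℝ) - (r i : ℝ)) * wt i :=
          mul_le_mul_of_nonneg_right hcard (hwt i)
      _ = wt i * (s * da) * ((t : ℝ) - (r i : ℝ)) := by ring
  linarith

/-- In the weighted unit-size setting, the dual variables `α_i` and
`β_{a,t} = ω_a(t)/(2s)` form a feasible dual solution: for every job `i` and every time
`t ≥ r_i`, `α_i − β_{u_i,t}/d_{u_i} − β_{v_i,t}/d_{v_i} ≤ w_i (t − r_i)`.  The schedule
has speed `s`: at most `s·d a` jobs incident to any vertex `a` are completed per step. -/
theorem weighted_dual_feasible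
    [Fintype J] [DecidableEq V]
    (u v : J → V) (d : V → ℕ) (wt : J → ℝ) (r C : J → ℕ) (s : ℝ)
    (hs : 0 < s) (hd : ∀ a, 0 < d a) (hwt : ∀ j, 0 ≤ wt j)
    (hrC : ∀ j, r j ≤ C j)
    (hcap : ∀ (a : V) (t : ℕ),
      ((univ.filter (fun j => C j = t ∧ (u j = a ∨ v j = a))).card : ℝ) ≤ s * d a)
    (i : J) (t : ℕ) (ht : r i ≤ t) :
    alphaDual u v d wt r C s i
        - omega u v wt r C (u i) t / (2 * s * d (u i))
        - omega u v wt r C (v i) t / (2 * s * d (v i))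
      ≤ wt i * ((t : ℝ) - (r i : ℝ)) := by
  have hdu : (0 : ℝ) < (d (u i) : ℝ) := by exact_mod_cast hd (u i)
  have hdv : (0 : ℝ) < (d (v i) : ℝ) := by exact_mod_cast hd (v i)
  have hXu := key_bound u v wt r C s (d (u i) : ℝ) hwt (u i) (fun τ => hcap (u i) τ) i t ht
  have hXv := key_bound u v wt r C s (d (v i) : ℝ) hwt (v i) (fun τ => hcap (v i) τ) i t ht
  have cu : (0 : ℝ) ≤ 1 / (2 * s) * (1 / (d (u i) : ℝ)) := by positivity
  have cv : (0 : ℝ) ≤ 1 / (2 * s) * (1 / (d (v i) : ℝ)) := by positivity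
  have hu2 : 1 / (2 * s) * ((1 / (d (u i) : ℝ)) *
      (wt i * (((aliveAt u v r C (u i) (r i)).filter (fun j => wt i < wt j)).card : ℝ)
        + ∑ j ∈ (aliveAt u v r C (u i) (r i)).filter (fun j => wt j < wt i), wt j))
      ≤ omega u v wt r C (u i) t / (2 * s * d (u i)) + wt i * ((t : ℝ) - (r i : ℝ)) / 2 := by
    calc 1 / (2 * s) * ((1 / (d (u i) : ℝ)) * _)
        = (1 / (2 * s) * (1 / (d (u i) : ℝ))) *
            (wt i * (((aliveAt u v r C (u i) (r i)).filter (fun j => wt i < wt j)).card : ℝ)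
              + ∑ j ∈ (aliveAt u v r C (u i) (r i)).filter (fun j => wt j < wt i), wt j) := by
          ring
      _ ≤ (1 / (2 * s) * (1 / (d (u i) : ℝ))) *
            (omega u v wt r C (u i) t + wt i * (s * (d (u i) : ℝ)) * ((t : ℝ) - (r i : ℝ))) :=
          mul_le_mul_of_nonneg_left hXu cu
      _ = omega u v wt r C (u i) t / (2 * s * d (u i)) + wt i * ((t : ℝ) - (r i : ℝ)) / 2 := by
          field_simp
  have hv2 : 1 / (2 * s) * ((1 / (d (v i) : ℝ)) *
      (wt i * (((aliveAt u v r C (v i) (r i)).filter (fun j => wt i < wt j)).card : ℝ)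
        + ∑ j ∈ (aliveAt u v r C (v i) (r i)).filter (fun j => wt j < wt i), wt j))
      ≤ omega u v wt r C (v i) t / (2 * s * d (v i)) + wt i * ((t : ℝ) - (r i : ℝ)) / 2 := by
    calc 1 / (2 * s) * ((1 / (d (v i) : ℝ)) * _)
        = (1 / (2 * s) * (1 / (d (v i) : ℝ))) *
            (wt i * (((aliveAt u v r C (v i) (r i)).filter (fun j => wt i < wt j)).card : ℝ)
              + ∑ j ∈ (aliveAt u v r C (v i) (r i)).filter (fun j => wt j < wt i), wt j) := by
          ring
      _ ≤ (1 / (2 * s) * (1 / (d (v i) : ℝ))) *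
            (omega u v wt r C (v i) t + wt i * (s * (d (v i) : ℝ)) * ((t : ℝ) - (r i : ℝ))) :=
          mul_le_mul_of_nonneg_left hXv cv
      _ = omega u v wt r C (v i) t / (2 * s * d (v i)) + wt i * ((t : ℝ) - (r i : ℝ)) / 2 := by
          field_simp
  unfold alphaDual
  rw [mul_add]
  linarith
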